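/- arXiv:2603.03061 — 3 statements merged into one kernel-verified Lean document; each statement's English description precedes it below -/
import Mathlib

section
/- Let M₁, M₂ be symmetric positive definite n×n matrices, z₁, z₂ ∈ ℝ^n, and for λ ∈ [0,1] set M_λ = (1-λ)M₁ + λM₂ and z_λ = (1-λ)z₁ + λz₂. Then ⟨M_λ^{-1} z_λ, z_λ⟩ ≤ (1-λ)⟨M₁^{-1} z₁, z₁⟩ + λ⟨M₂^{-1} z₂, z₂⟩. -/
open Matrix

private lemma key_symm (n : ℕ) (M : Matrix (Fin n) (Fin n) ℝ) (hM : M.PosDef)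
    (u v : Fin n → ℝ) : u ⬝ᵥ (M *ᵥ v) = (M *ᵥ u) ⬝ᵥ v := by
  have ht : Mᵀ = M := by simpa using hM.isHermitian.eq
  rw [dotProduct_mulVec, ← mulVec_transpose, ht]

private lemma key_bound (n : ℕ) (M : Matrix (Fin n) (Fin n) ℝ) (hM : M.PosDef)
    (x z : Fin n → ℝ) :
    2 * (x ⬝ᵥ z) - (M *ᵥ x) ⬝ᵥ x ≤ (M⁻¹ *ᵥ z) ⬝ᵥ z := by
  have hinv : M *ᵥ (M⁻¹ *ᵥ z) = z := by
    rw [mulVec_mulVec, mul_nonsing_inv _ hM.det_pos.ne'.isUnit, one_mulVec]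
  set w := M⁻¹ *ᵥ z with hw
  have hpos : 0 ≤ (x - w) ⬝ᵥ (M *ᵥ (x - w)) := hM.posSemidef.dotProduct_mulVec_nonneg (x - w)
  have hexp : (x - w) ⬝ᵥ (M *ᵥ (x - w))
      = x ⬝ᵥ (M *ᵥ x) - 2 * (x ⬝ᵥ z) + w ⬝ᵥ z := by
    rw [mulVec_sub, dotProduct_sub, sub_dotProduct, sub_dotProduct, hinv]
    have h1 : w ⬝ᵥ (M *ᵥ x) = x ⬝ᵥ z := by
      rw [key_symm n M hM w x, hinv, dotProduct_comm]
    have h2 : x ⬝ᵥ z = z ⬝ᵥ x := dotProduct_comm _ _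
    have h3 : w ⬝ᵥ z = z ⬝ᵥ w := dotProduct_comm _ _
    rw [h1]
    nlinarith [h2, h3]
  have hMx : (M *ᵥ x) ⬝ᵥ x = x ⬝ᵥ (M *ᵥ x) := (key_symm n M hM x x).symm
  have : (M⁻¹ *ᵥ z) ⬝ᵥ z = w ⬝ᵥ z := rfl
  nlinarith [hpos, hexp]

private lemma key_posdef (n : ℕ) (M₁ M₂ : Matrix (Fin n) (Fin n) ℝ)
    (h₁ : M₁.PosDef) (h₂ : M₂.PosDef) (l : ℝ) (hl0 : 0 ≤ l) (hl1 : l ≤ 1) :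
    ((1 - l) • M₁ + l • M₂).PosDef := by
  refine posDef_iff_dotProduct_mulVec.mpr ⟨?_, ?_⟩
  · have e1 : M₁ᴴ = M₁ := h₁.isHermitian.eq
    have e2 : M₂ᴴ = M₂ := h₂.isHermitian.eq
    show ((1 - l) • M₁ + l • M₂)ᴴ = _
    rw [conjTranspose_add, conjTranspose_smul, conjTranspose_smul, e1, e2,
      star_trivial, star_trivial]
  · intro x hx
    have p1 : 0 < x ⬝ᵥ (M₁ *ᵥ x) := h₁.dotProduct_mulVec_pos hx
    have p2 : 0 < x ⬝ᵥ (M₂ *ᵥ x) := h₂.dotProduct_mulVec_pos hx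
    show 0 < star x ⬝ᵥ _
    rw [star_trivial, add_mulVec, smul_mulVec, smul_mulVec,
      dotProduct_add, dotProduct_smul, dotProduct_smul]
    simp only [smul_eq_mul]
    rcases lt_or_eq_of_le hl1 with h | h
    · have q1 := mul_pos (by linarith : (0:ℝ) < 1 - l) p1
      have q2 := mul_nonneg hl0 p2.le
      linarith
    · subst h
      simpa using p2

/-- For symmetric positive definite matrices `M₁, M₂`,
vectors `z₁, z₂`, and `λ ∈ [0,1]`, with `M_λ = (1-λ)M₁ + λM₂` and
`z_λ = (1-λ)z₁ + λz₂`, one has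
`⟨M_λ⁻¹ z_λ, z_λ⟩ ≤ (1-λ)⟨M₁⁻¹ z₁, z₁⟩ + λ⟨M₂⁻¹ z₂, z₂⟩`. -/
theorem inv_quadratic_form_convex (n : ℕ)
    (M₁ M₂ : Matrix (Fin n) (Fin n) ℝ)
    (h₁ : M₁.PosDef) (h₂ : M₂.PosDef)
    (z₁ z₂ : Fin n → ℝ) (l : ℝ) (hl0 : 0 ≤ l) (hl1 : l ≤ 1) :
    (((1 - l) • M₁ + l • M₂)⁻¹ *ᵥ ((1 - l) • z₁ + l • z₂)) ⬝ᵥ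
        ((1 - l) • z₁ + l • z₂)
      ≤ (1 - l) * ((M₁⁻¹ *ᵥ z₁) ⬝ᵥ z₁) + l * ((M₂⁻¹ *ᵥ z₂) ⬝ᵥ z₂) := by
  set Ml := (1 - l) • M₁ + l • M₂ with hMl
  set zl := (1 - l) • z₁ + l • z₂ with hzl
  have hMlpd : Ml.PosDef := key_posdef n M₁ M₂ h₁ h₂ l hl0 hl1
  set x := Ml⁻¹ *ᵥ zl with hx
  have hinv : Ml *ᵥ x = zl := by
    rw [hx, mulVec_mulVec, mul_nonsing_inv _ hMlpd.det_pos.ne'.isUnit, one_mulVec]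
  have heq : x ⬝ᵥ zl = 2 * (x ⬝ᵥ zl) - (Ml *ᵥ x) ⬝ᵥ x := by
    rw [hinv, dotProduct_comm zl x]; ring
  have hLHS : (Ml⁻¹ *ᵥ zl) ⬝ᵥ zl = x ⬝ᵥ zl := rfl
  have hsplit : 2 * (x ⬝ᵥ zl) - (Ml *ᵥ x) ⬝ᵥ x
      = (1 - l) * (2 * (x ⬝ᵥ z₁) - (M₁ *ᵥ x) ⬝ᵥ x)
        + l * (2 * (x ⬝ᵥ z₂) - (M₂ *ᵥ x) ⬝ᵥ x) := by
    rw [hMl, hzl, add_mulVec, smul_mulVec, smul_mulVec,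
      add_dotProduct, smul_dotProduct, smul_dotProduct,
      dotProduct_add, dotProduct_smul, dotProduct_smul]
    simp only [smul_eq_mul]
    ring
  have hb1 := key_bound n M₁ h₁ x z₁
  have hb2 := key_bound n M₂ h₂ x z₂
  rw [hLHS, heq, hsplit]
  have h1l : (0:ℝ) ≤ 1 - l := by linarith
  gcongr
end

section
/- Let M₁, M₂ be symmetric positive definite n×n matrices, t₁, t₂ ∈ ℝ, and for λ ∈ [0,1] set M_λ = (1-λ)M₁ + λM₂ and t_λ = (1-λ)t₁ + λt₂. Then t_λ² · Tr(M_λ^{-1}) ≤ (1-λ) t₁² Tr(M₁^{-1}) + λ t₂² Tr(M₂^{-1}). -/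
open Matrix

private lemma key_ineq {n : ℕ} {M : Matrix (Fin n) (Fin n) ℝ} (hM : M.PosDef)
    (t : ℝ) (x y : Fin n → ℝ) :
    2 * t * (y ⬝ᵥ x) - y ⬝ᵥ M *ᵥ y ≤ t ^ 2 * (x ⬝ᵥ M⁻¹ *ᵥ x) := by
  set w : Fin n → ℝ := M⁻¹ *ᵥ x with hw
  have hdet : IsUnit M.det := isUnit_iff_ne_zero.mpr hM.det_pos.ne'
  have hMw : M *ᵥ w = x := by
    rw [hw, mulVec_mulVec, Matrix.mul_nonsing_inv _ hdet, one_mulVec]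
  have hsym : Mᵀ = M := by
    rw [← conjTranspose_eq_transpose_of_trivial]; exact hM.1
  have e1 : y ⬝ᵥ M *ᵥ w = y ⬝ᵥ x := by rw [hMw]
  have e2 : w ⬝ᵥ M *ᵥ y = y ⬝ᵥ x := by
    rw [dotProduct_mulVec, ← mulVec_transpose, hsym, hMw, dotProduct_comm]
  have e3 : w ⬝ᵥ M *ᵥ w = x ⬝ᵥ w := by rw [hMw, dotProduct_comm]
  have h0 : (0:ℝ) ≤ (y - t • w) ⬝ᵥ M *ᵥ (y - t • w) := by
    simpa using hM.posSemidef.dotProduct_mulVec_nonneg (y - t • w)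
  have hexp : (y - t • w) ⬝ᵥ M *ᵥ (y - t • w)
      = y ⬝ᵥ M *ᵥ y - 2 * t * (y ⬝ᵥ x) + t ^ 2 * (x ⬝ᵥ w) := by
    simp only [Matrix.mulVec_sub, Matrix.mulVec_smul, sub_dotProduct, dotProduct_sub,
      smul_dotProduct, dotProduct_smul, smul_eq_mul, e1, e2, e3]
    ring
  linarith [hexp ▸ h0]

/-- For symmetric positive definite matrices `M₁, M₂`,
reals `t₁, t₂`, and `λ ∈ [0,1]`, with `M_λ = (1-λ)M₁ + λM₂` and
`t_λ = (1-λ)t₁ + λt₂`, one has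
`t_λ² Tr(M_λ⁻¹) ≤ (1-λ) t₁² Tr(M₁⁻¹) + λ t₂² Tr(M₂⁻¹)`. -/
theorem sq_mul_trace_inv_convex (n : ℕ)
    (M₁ M₂ : Matrix (Fin n) (Fin n) ℝ)
    (h₁ : M₁.PosDef) (h₂ : M₂.PosDef)
    (t₁ t₂ : ℝ) (l : ℝ) (hl0 : 0 ≤ l) (hl1 : l ≤ 1) :
    ((1 - l) * t₁ + l * t₂) ^ 2 * (((1 - l) • M₁ + l • M₂)⁻¹).trace
      ≤ (1 - l) * (t₁ ^ 2 * (M₁⁻¹).trace) + l * (t₂ ^ 2 * (M₂⁻¹).trace) := by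
  have hl1' : (0:ℝ) ≤ 1 - l := by linarith
  set A := (1 - l) • M₁ + l • M₂ with hA
  have hApd : A.PosDef := by
    refine posDef_iff_dotProduct_mulVec.mpr ⟨?_, ?_⟩
    · show Aᴴ = A
      have hs1 : M₁ᵀ = M₁ := by
        rw [← conjTranspose_eq_transpose_of_trivial]; exact h₁.1
      have hs2 : M₂ᵀ = M₂ := by
        rw [← conjTranspose_eq_transpose_of_trivial]; exact h₂.1
      simp [hA, conjTranspose_add, conjTranspose_smul, hs1, hs2]
    · intro x hx
      have q1 : 0 < x ⬝ᵥ M₁ *ᵥ x := by simpa using h₁.dotProduct_mulVec_pos hx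
      have q2 : 0 < x ⬝ᵥ M₂ *ᵥ x := by simpa using h₂.dotProduct_mulVec_pos hx
      have hq : star x ⬝ᵥ A *ᵥ x = (1 - l) * (x ⬝ᵥ M₁ *ᵥ x) + l * (x ⬝ᵥ M₂ *ᵥ x) := by
        simp [hA, add_mulVec, smul_mulVec, dotProduct_add, dotProduct_smul, smul_eq_mul]
      rw [hq]
      rcases lt_or_eq_of_le hl1 with h | h
      · have := mul_pos (by linarith : (0:ℝ) < 1 - l) q1
        nlinarith [mul_nonneg hl0 q2.le]
      · subst h; simpa using q2
  have hdetA : IsUnit A.det := isUnit_iff_ne_zero.mpr hApd.det_pos.ne'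
  have hvec : ∀ x : Fin n → ℝ,
      ((1 - l) * t₁ + l * t₂) ^ 2 * (x ⬝ᵥ A⁻¹ *ᵥ x)
        ≤ (1 - l) * (t₁ ^ 2 * (x ⬝ᵥ M₁⁻¹ *ᵥ x)) + l * (t₂ ^ 2 * (x ⬝ᵥ M₂⁻¹ *ᵥ x)) := by
    intro x
    set t : ℝ := (1 - l) * t₁ + l * t₂ with ht
    set y : Fin n → ℝ := t • (A⁻¹ *ᵥ x) with hy
    have hAx : A *ᵥ (A⁻¹ *ᵥ x) = x := by
      rw [mulVec_mulVec, Matrix.mul_nonsing_inv _ hdetA, one_mulVec]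
    have e1 : y ⬝ᵥ x = t * (x ⬝ᵥ A⁻¹ *ᵥ x) := by
      rw [hy, smul_dotProduct, smul_eq_mul, dotProduct_comm]
    have e2 : y ⬝ᵥ A *ᵥ y = t ^ 2 * (x ⬝ᵥ A⁻¹ *ᵥ x) := by
      rw [hy, smul_dotProduct, Matrix.mulVec_smul, dotProduct_smul, hAx, smul_eq_mul,
        smul_eq_mul, dotProduct_comm]
      ring
    have heq : t ^ 2 * (x ⬝ᵥ A⁻¹ *ᵥ x) = 2 * t * (y ⬝ᵥ x) - y ⬝ᵥ A *ᵥ y := by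
      rw [e1, e2]; ring
    have hsplit : y ⬝ᵥ A *ᵥ y = (1 - l) * (y ⬝ᵥ M₁ *ᵥ y) + l * (y ⬝ᵥ M₂ *ᵥ y) := by
      simp [hA, add_mulVec, smul_mulVec, dotProduct_add, dotProduct_smul, smul_eq_mul]
    have k1 := mul_le_mul_of_nonneg_left (key_ineq h₁ t₁ x y) hl1'
    have k2 := mul_le_mul_of_nonneg_left (key_ineq h₂ t₂ x y) hl0
    have hid : 2 * t * (y ⬝ᵥ x) - ((1 - l) * (y ⬝ᵥ M₁ *ᵥ y) + l * (y ⬝ᵥ M₂ *ᵥ y))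
        = (1 - l) * (2 * t₁ * (y ⬝ᵥ x) - y ⬝ᵥ M₁ *ᵥ y)
          + l * (2 * t₂ * (y ⬝ᵥ x) - y ⬝ᵥ M₂ *ᵥ y) := by
      rw [ht]; ring
    rw [heq, hsplit]
    linarith
  have hdiag : ∀ (B : Matrix (Fin n) (Fin n) ℝ) (i : Fin n),
      Pi.single i 1 ⬝ᵥ B *ᵥ Pi.single i 1 = B i i := by
    intro B i
    simp [single_dotProduct]
  have hsum := Finset.sum_le_sum
    (fun i (_ : i ∈ Finset.univ) => hvec (Pi.single i 1))
  simp only [hdiag] at hsum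
  have trA : (A⁻¹).trace = ∑ i, A⁻¹ i i := rfl
  have tr1 : (M₁⁻¹).trace = ∑ i, M₁⁻¹ i i := rfl
  have tr2 : (M₂⁻¹).trace = ∑ i, M₂⁻¹ i i := rfl
  rw [trA, tr1, tr2, Finset.mul_sum, Finset.mul_sum, Finset.mul_sum, Finset.mul_sum,
    Finset.mul_sum]
  calc ∑ i, ((1 - l) * t₁ + l * t₂) ^ 2 * A⁻¹ i i
      ≤ ∑ i, ((1 - l) * (t₁ ^ 2 * M₁⁻¹ i i) + l * (t₂ ^ 2 * M₂⁻¹ i i)) := hsum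
    _ = ∑ i, (1 - l) * (t₁ ^ 2 * M₁⁻¹ i i) + ∑ i, l * (t₂ ^ 2 * M₂⁻¹ i i) :=
        Finset.sum_add_distrib
    _ = _ := by simp [Finset.mul_sum, mul_assoc]
end

section
/- Let K₁, K₂ ⊂ ℝ^n be compact convex sets of class C²_+ and λ ∈ [0,1]. At boundary points x₁ ∈ ∂K₁ and x₂ ∈ ∂K₂ with a common outer unit normal ξ, the Gaussian curvatures satisfy 1/𝒦_{∂K_λ}((1-λ)x₁ + λx₂) ≥ (1-λ)^{n-1}/𝒦_{∂K₁}(x₁) + λ^{n-1}/𝒦_{∂K₂}(x₂), where K_λ = (1-λ)K₁ + λK₂; in particular 𝒦_{∂K_λ}((1-λ)x₁+λx₂) ≤ min(𝒦_{∂K₁}(x₁)/(1-λ)^{n-1}, 𝒦_{∂K₂}(x₂)/λ^{n-1}) and for λ ∈ (0,1), 𝒦_{∂K_λ} ≤ 𝒦_{∂K₁}(x₁) + 𝒦_{∂K₂}(x₂) at corresponding points. -/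
open Matrix

open scoped MatrixOrder in
private lemma gcm_core {ι : Type*} [Fintype ι] [DecidableEq ι]
    (A B : Matrix ι ι ℝ) (hA : A.PosDef) (hB : B.PosSemidef) :
    ∃ μ : ι → ℝ, (∀ i, 0 ≤ μ i) ∧ (B.PosDef → ∀ i, 0 < μ i) ∧
      B.det = A.det * ∏ i, μ i ∧
      ∀ a b : ℝ, (a • A + b • B).det = A.det * ∏ i, (a + b * μ i) := by
  have hS : (CFC.sqrt A).PosSemidef := (CFC.sqrt_nonneg A).posSemidef
  set S := CFC.sqrt A with hSdef
  have hSS : S * S = A := CFC.sqrt_mul_sqrt_self A hA.posSemidef.nonneg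
  have hdetA : 0 < A.det := hA.det_pos
  have hdetS : S.det ≠ 0 := by
    intro h
    rw [← hSS, det_mul, h, mul_zero] at hdetA
    exact lt_irrefl _ hdetA
  have hSunit : IsUnit S.det := isUnit_iff_ne_zero.mpr hdetS
  have hSinv : S * S⁻¹ = 1 := mul_nonsing_inv S hSunit
  have hSinv' : S⁻¹ * S = 1 := nonsing_inv_mul S hSunit
  have hSherm : S⁻¹.IsHermitian := hS.isHermitian.inv
  set M := S⁻¹ * B * S⁻¹ with hMdef
  have hM : M.PosSemidef := by
    have := hB.conjTranspose_mul_mul_same S⁻¹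
    rwa [hSherm.eq] at this
  have hBM : S * M * S = B := by
    rw [hMdef, ← mul_assoc, ← mul_assoc, hSinv, one_mul, mul_assoc, hSinv', mul_one]
  have hdetB : B.det = A.det * ∏ i, hM.1.eigenvalues i := by
    rw [← hBM, det_mul, det_mul, mul_comm, ← mul_assoc, ← det_mul, hSS,
      hM.1.det_eq_prod_eigenvalues]
    norm_num
  refine ⟨hM.1.eigenvalues, hM.eigenvalues_nonneg, ?_, hdetB, ?_⟩
  · intro hBd i
    have hprod : 0 < ∏ j, hM.1.eigenvalues j := by
      have := hBd.det_pos
      rw [hdetB] at this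
      nlinarith [hdetA]
    rcases (hM.eigenvalues_nonneg i).lt_or_eq with h | h
    · exact h
    · exfalso
      have h0 : ∏ j, hM.1.eigenvalues j = 0 :=
        Finset.prod_eq_zero (Finset.mem_univ i) h.symm
      rw [h0] at hprod; exact lt_irrefl _ hprod
  · intro a b
    have key : a • A + b • B = S * (a • (1 : Matrix ι ι ℝ) + b • M) * S := by
      rw [Matrix.mul_add, Matrix.add_mul, Matrix.mul_smul, Matrix.smul_mul,
        Matrix.mul_smul, Matrix.smul_mul, mul_one, hSS, hBM]
    rw [key, det_mul, det_mul, mul_comm, ← mul_assoc, ← det_mul, hSS]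
    congr 1
    have hspec := hM.1.spectral_theorem
    set U := (hM.1.eigenvectorUnitary : Matrix ι ι ℝ) with hU
    have hUU : U * star U = 1 := Matrix.mem_unitaryGroup_iff.mp hM.1.eigenvectorUnitary.2
    have hUU' : star U * U = 1 := Matrix.mem_unitaryGroup_iff'.mp hM.1.eigenvectorUnitary.2
    have key2 : a • (1 : Matrix ι ι ℝ) + b • M
        = U * (a • (1 : Matrix ι ι ℝ) + b • diagonal (RCLike.ofReal ∘ hM.1.eigenvalues)) * star U := by
      rw [Matrix.mul_add, Matrix.add_mul, Matrix.mul_smul, Matrix.smul_mul, mul_one, hUU,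
        Matrix.mul_smul, Matrix.smul_mul]
      exact congrArg (fun X => a • (1 : Matrix ι ι ℝ) + b • X) hspec
    rw [key2, det_mul, det_mul, mul_comm, ← mul_assoc, ← det_mul, hUU', det_one, one_mul]
    have : a • (1 : Matrix ι ι ℝ) + b • diagonal (RCLike.ofReal ∘ hM.1.eigenvalues)
        = diagonal (fun i => a + b * hM.1.eigenvalues i) := by
      rw [← diagonal_one, ← diagonal_smul, ← diagonal_smul, diagonal_add]
      ext i j
      by_cases h : i = j <;> simp [h, RCLike.ofReal]
    rw [this, det_diagonal]

private lemma gcm_prod_superadd {ι : Type*} [DecidableEq ι] (s : Finset ι) (hs : s.Nonempty)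
    (a b : ℝ) (μ : ι → ℝ) (ha : 0 ≤ a) (hb : 0 ≤ b) (hμ : ∀ i, 0 ≤ μ i) :
    a ^ s.card + b ^ s.card * ∏ i ∈ s, μ i ≤ ∏ i ∈ s, (a + b * μ i) := by
  induction hs using Finset.Nonempty.cons_induction with
  | singleton i => simp
  | cons i s hi hs ih =>
    rw [Finset.prod_cons, Finset.prod_cons, Finset.card_cons]
    have hP : 0 ≤ ∏ j ∈ s, μ j := Finset.prod_nonneg fun j _ => hμ j
    have hak : (0:ℝ) ≤ a ^ s.card := pow_nonneg ha _
    have hbk : (0:ℝ) ≤ b ^ s.card := pow_nonneg hb _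
    have hfac : 0 ≤ a + b * μ i := add_nonneg ha (mul_nonneg hb (hμ i))
    calc a ^ (s.card + 1) + b ^ (s.card + 1) * (μ i * ∏ j ∈ s, μ j)
        ≤ (a + b * μ i) * (a ^ s.card + b ^ s.card * ∏ j ∈ s, μ j) := by
          have h1 : 0 ≤ a * (b ^ s.card * ∏ j ∈ s, μ j) := by positivity
          have h2 : 0 ≤ b * μ i * a ^ s.card := mul_nonneg (mul_nonneg hb (hμ i)) hak
          ring_nf
          nlinarith [hμ i]
      _ ≤ (a + b * μ i) * ∏ j ∈ s, (a + b * μ j) := by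
          exact mul_le_mul_of_nonneg_left ih hfac

/-- Gaussian curvature under Minkowski combination, reduced
(via `1/𝒦_{∂K}(x) = det(∇²h_K(ξ) + h_K(ξ)I)` at `ξ = g_K(x)` and the linearity
`h_{K_λ} = (1-λ)h_{K₁} + λh_{K₂}`) to positive definite `(n-1)×(n-1)` matrices
`A₁, A₂` representing the curvature data of `K₁, K₂` at boundary points with a
common outer normal: with `𝒦ᵢ = (det Aᵢ)⁻¹` and
`𝒦_λ = (det((1-λ)A₁ + λA₂))⁻¹`, one has
`1/𝒦_λ ≥ (1-λ)^{n-1}/𝒦₁ + λ^{n-1}/𝒦₂`; in particular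
`(1-λ)^{n-1} 𝒦_λ ≤ 𝒦₁` and `λ^{n-1} 𝒦_λ ≤ 𝒦₂`, and for `λ ∈ (0,1)`,
`𝒦_λ ≤ 𝒦₁ + 𝒦₂`. -/
theorem gaussian_curvature_minkowski (n : ℕ) (hn : 2 ≤ n)
    (A₁ A₂ : Matrix (Fin (n - 1)) (Fin (n - 1)) ℝ)
    (h₁ : A₁.PosDef) (h₂ : A₂.PosDef)
    (l : ℝ) (hl0 : 0 ≤ l) (hl1 : l ≤ 1)
    (𝒦₁ 𝒦₂ 𝒦l : ℝ)
    (hK1 : 𝒦₁ = (A₁.det)⁻¹) (hK2 : 𝒦₂ = (A₂.det)⁻¹)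
    (hKl : 𝒦l = (((1 - l) • A₁ + l • A₂).det)⁻¹) :
    (1 - l) ^ (n - 1) * 𝒦₁⁻¹ + l ^ (n - 1) * 𝒦₂⁻¹ ≤ 𝒦l⁻¹ ∧
    (1 - l) ^ (n - 1) * 𝒦l ≤ 𝒦₁ ∧ l ^ (n - 1) * 𝒦l ≤ 𝒦₂ ∧
    (0 < l → l < 1 → 𝒦l ≤ 𝒦₁ + 𝒦₂) := by
  obtain ⟨μ, hμ0, hμpos', hdet2, hdetc⟩ := gcm_core A₁ A₂ h₁ h₂.posSemidef
  have hμpos : ∀ i, 0 < μ i := hμpos' h₂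
  set a := A₁.det with ha_def
  set b := A₂.det with hb_def
  have ha : 0 < a := h₁.det_pos
  have hb : 0 < b := h₂.det_pos
  have hl1' : 0 ≤ 1 - l := by linarith
  -- the combined determinant
  set D := ((1 - l) • A₁ + l • A₂).det with hD_def
  have hDval : D = a * ∏ i, (1 - l + l * μ i) := hdetc (1 - l) l
  have hfacpos : ∀ i, 0 < 1 - l + l * μ i := by
    intro i
    rcases lt_or_eq_of_le hl1 with h | h
    · nlinarith [hμpos i, mul_nonneg hl0 (hμpos i).le]
    · rw [h]; simpa using hμpos i
  have hD : 0 < D := by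
    rw [hDval]
    exact mul_pos ha (Finset.prod_pos fun i _ => hfacpos i)
  -- cardinality
  have hne : Nonempty (Fin (n - 1)) := ⟨⟨0, by omega⟩⟩
  have hcard : (Finset.univ : Finset (Fin (n - 1))).card = n - 1 := by simp
  -- main superadditivity
  have hmain : (1 - l) ^ (n - 1) * a + l ^ (n - 1) * b ≤ D := by
    have := gcm_prod_superadd (Finset.univ : Finset (Fin (n - 1)))
      Finset.univ_nonempty (1 - l) l μ hl1' hl0 fun i => (hμpos i).le
    rw [hcard] at this
    calc (1 - l) ^ (n - 1) * a + l ^ (n - 1) * b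
        = a * ((1 - l) ^ (n - 1) + l ^ (n - 1) * ∏ i, μ i) := by
          rw [hdet2]; ring
      _ ≤ a * ∏ i, (1 - l + l * μ i) := by
          exact mul_le_mul_of_nonneg_left this ha.le
      _ = D := hDval.symm
  have hK1' : 𝒦₁⁻¹ = a := by rw [hK1, inv_inv]
  have hK2' : 𝒦₂⁻¹ = b := by rw [hK2, inv_inv]
  have hKl' : 𝒦l⁻¹ = D := by rw [hKl, inv_inv]
  have hKlD : 𝒦l = D⁻¹ := hKl
  refine ⟨by rw [hK1', hK2', hKl']; exact hmain, ?_, ?_, ?_⟩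
  · -- (1-l)^(n-1) * 𝒦l ≤ 𝒦₁
    rw [hKlD, hK1]
    have h1 : (1 - l) ^ (n - 1) * a ≤ D := by
      nlinarith [mul_nonneg (pow_nonneg hl0 (n-1)) hb.le]
    rw [inv_eq_one_div, inv_eq_one_div, mul_one_div, div_le_div_iff₀ hD ha]
    linarith
  · -- l^(n-1) * 𝒦l ≤ 𝒦₂
    rw [hKlD, hK2]
    have h1 : l ^ (n - 1) * b ≤ D := by
      nlinarith [mul_nonneg (pow_nonneg hl1' (n-1)) ha.le]
    rw [inv_eq_one_div, inv_eq_one_div, mul_one_div, div_le_div_iff₀ hD hb]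
    linarith
  · -- strict case
    intro hlpos hllt
    rw [hKlD, hK1, hK2]
    set c := min a b with hc_def
    have hc : 0 < c := lt_min ha hb
    have hgm : ∀ i, μ i ^ l ≤ 1 - l + l * μ i := by
      intro i
      have := Real.geom_mean_le_arith_mean2_weighted hl1' hl0 zero_le_one (hμpos i).le
        (by ring)
      simpa [Real.one_rpow] using this
    have hprodμ : (0:ℝ) < ∏ i, μ i := Finset.prod_pos fun i _ => hμpos i
    have hprodle : (∏ i, μ i) ^ l ≤ ∏ i, (1 - l + l * μ i) := by
      rw [← Real.finset_prod_rpow _ _ (fun i _ => (hμpos i).le) l]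
      exact Finset.prod_le_prod (fun i _ => Real.rpow_nonneg (hμpos i).le l)
        (fun i _ => hgm i)
    have hprodval : (∏ i, μ i) = b / a := by
      rw [eq_div_iff ha.ne']
      linarith [hdet2]
    have hDge : a * (b / a) ^ l ≤ D := by
      rw [hDval, ← hprodval]
      exact mul_le_mul_of_nonneg_left hprodle ha.le
    have heq : a * (b / a) ^ l = a ^ (1 - l) * b ^ l := by
      rw [Real.div_rpow hb.le ha.le]
      rw [show a * (b ^ l / a ^ l) = (a ^ (1:ℝ) / a ^ l) * b ^ l by rw [Real.rpow_one]; ring]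
      rw [← Real.rpow_sub ha]
    have hcle : c ≤ a ^ (1 - l) * b ^ l := by
      have h1 : c ^ (1 - l) ≤ a ^ (1 - l) :=
        Real.rpow_le_rpow hc.le (min_le_left a b) hl1'
      have h2 : c ^ l ≤ b ^ l :=
        Real.rpow_le_rpow hc.le (min_le_right a b) hl0
      have h3 : c = c ^ (1 - l) * c ^ l := by
        rw [← Real.rpow_add hc]
        norm_num
      rw [h3]
      exact mul_le_mul h1 h2 (Real.rpow_nonneg hc.le l) (Real.rpow_nonneg ha.le _)
    have hcD : c ≤ D := le_trans hcle (heq ▸ hDge)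
    have hinv : D⁻¹ ≤ c⁻¹ := by
      apply inv_anti₀ hc hcD
    refine le_trans hinv ?_
    rcases le_total a b with h | h
    · have hce : c = a := min_eq_left h
      rw [hce]
      have : (0:ℝ) ≤ b⁻¹ := by positivity
      linarith
    · have hce : c = b := min_eq_right h
      rw [hce]
      have : (0:ℝ) ≤ a⁻¹ := by positivity
      linarith
end
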